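/- For all integers n ≥ 2 and k ≥ 1, the number of isomorphism classes of initially-connected complete deterministic finite automata (with a designated set of final states) with n states over an alphabet of k symbols equals 2^n · B_{k,n}, where B_{k,n} is the number of strings (s_i)_{i∈[0,kn−1]} with s_i ∈ [0,n−1] satisfying rules (R1) and (R2). -/

import Mathlib

/-- Rule (R1). -/
def RuleR1 (n k : ℕ) (s : Fin (k * n) → Fin n) : Prop :=
  ∀ m : ℕ, 2 ≤ m → m ≤ n - 1 → ∀ i : Fin (k * n), (s i : ℕ) = m →
    ∃ j : Fin (k * n), (j : ℕ) < (i : ℕ) ∧ (s j : ℕ) = m - 1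

/-- Rule (R2). -/
def RuleR2 (n k : ℕ) (s : Fin (k * n) → Fin n) : Prop :=
  ∀ m : ℕ, 1 ≤ m → m ≤ n - 1 → ∃ j : Fin (k * n), (j : ℕ) < k * m ∧ (s j : ℕ) = m

/-- A complete DFA with `n` states over a `k`-letter alphabet:  a transition
function, an initial state, and a set of final states. -/
structure DFAacc (n k : ℕ) where
  delta : Fin n → Fin k → Fin n
  q0 : Fin n
  final : Finset (Fin n)

/-- Extension of the transition function to words. -/
def deltaStar {n k : ℕ} (d : Fin n → Fin k → Fin n) : Fin n → List (Fin k) → Fin n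
  | q, [] => q
  | q, a :: w => deltaStar d (d q a) w

/-- Initially connected: every state is reachable from the initial state. -/
def InitiallyConn {n k : ℕ} (A : DFAacc n k) : Prop :=
  ∀ q : Fin n, ∃ w : List (Fin k), deltaStar A.delta A.q0 w = q

/-- Isomorphism of DFAs (respecting initial state, transitions, and final
states). -/
def IsIso {n k : ℕ} (A B : DFAacc n k) : Prop :=
  ∃ f : Fin n ≃ Fin n, f A.q0 = B.q0 ∧
    (∀ q σ, f (A.delta q σ) = B.delta (f q) σ) ∧
    ∀ q, q ∈ A.final ↔ f q ∈ B.final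


namespace Canon

variable {n k : ℕ}

/-- The BFS-style scan of the transition table. -/
def scan (hk : 0 < k) (A : DFAacc n k) : ℕ → List (Fin n)
  | 0 => [A.q0]
  | (t+1) =>
    let L := scan hk A t
    let tgt := A.delta (L.getD (t / k) A.q0) ⟨t % k, Nat.mod_lt t hk⟩
    if tgt ∈ L then L else L ++ [tgt]

lemma scan_zero (hk : 0 < k) (A : DFAacc n k) : scan hk A 0 = [A.q0] := rfl

lemma scan_succ (hk : 0 < k) (A : DFAacc n k) (t : ℕ) :
    scan hk A (t+1) =
      let L := scan hk A t
      let tgt := A.delta (L.getD (t / k) A.q0) ⟨t % k, Nat.mod_lt t hk⟩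
      if tgt ∈ L then L else L ++ [tgt] := rfl

lemma scan_prefix_succ (hk : 0 < k) (A : DFAacc n k) (t : ℕ) :
    scan hk A t <+: scan hk A (t+1) := by
  rw [scan_succ]
  dsimp only
  split
  · exact List.prefix_refl _
  · exact List.prefix_append _ _

lemma scan_prefix (hk : 0 < k) (A : DFAacc n k) {s t : ℕ} (h : s ≤ t) :
    scan hk A s <+: scan hk A t := by
  induction t with
  | zero => simp_all
  | succ t ih =>
    rcases Nat.lt_or_ge s (t+1) with h' | h'
    · exact (ih (Nat.lt_succ_iff.mp h')).trans (scan_prefix_succ hk A t)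
    · have : s = t + 1 := le_antisymm h h'
      subst this; exact List.prefix_refl _

lemma scan_ne_nil (hk : 0 < k) (A : DFAacc n k) (t : ℕ) : scan hk A t ≠ [] := by
  have := (scan_prefix hk A (Nat.zero_le t)).length_le
  simp [scan_zero] at this
  exact List.ne_nil_of_length_pos (by omega)

lemma scan_length_pos (hk : 0 < k) (A : DFAacc n k) (t : ℕ) : 0 < (scan hk A t).length :=
  List.length_pos_iff.mpr (scan_ne_nil hk A t)

lemma scan_nodup (hk : 0 < k) (A : DFAacc n k) (t : ℕ) : (scan hk A t).Nodup := by
  induction t with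
  | zero => simp [scan_zero]
  | succ t ih =>
    rw [scan_succ]
    dsimp only
    split
    · exact ih
    · rename_i h
      simp only [List.nodup_append, List.nodup_singleton, true_and, ih, List.getD]
      simp [List.getD] at h ⊢
      intro a ha hx
      exact h (hx ▸ ha)

lemma scan_length_le (hk : 0 < k) (A : DFAacc n k) (t : ℕ) : (scan hk A t).length ≤ n := by
  simpa using (scan_nodup hk A t).length_le_card

lemma scan_getD_eq (hk : 0 < k) (A : DFAacc n k) {s t : ℕ} (h : s ≤ t) {i : ℕ}
    (hi : i < (scan hk A s).length) :
    (scan hk A t).getD i A.q0 = (scan hk A s).getD i A.q0 := by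
  obtain ⟨u, hu⟩ := scan_prefix hk A h
  rw [← hu]
  rw [List.getD_eq_getElem _ _ hi, List.getD_eq_getElem,
    List.getElem_append_left hi]
  · exact List.length_append ▸ Nat.lt_of_lt_of_le hi (Nat.le_add_right _ _)

lemma scan_head (hk : 0 < k) (A : DFAacc n k) (t : ℕ) :
    (scan hk A t).getD 0 A.q0 = A.q0 := by
  rw [scan_getD_eq hk A (Nat.zero_le t) (by simp [scan_zero])]
  simp [scan_zero]

/-- The target scanned at step `t` is in the list at time `t+1`. -/
lemma step_mem (hk : 0 < k) (A : DFAacc n k) (t : ℕ) :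
    A.delta ((scan hk A t).getD (t / k) A.q0) ⟨t % k, Nat.mod_lt t hk⟩ ∈ scan hk A (t+1) := by
  rw [scan_succ]
  dsimp only
  split
  · assumption
  · simp

end Canon

namespace Canon
variable {n k : ℕ}

lemma conn_univ {A : DFAacc n k} (hc : InitiallyConn A) {S : Finset (Fin n)}
    (h0 : A.q0 ∈ S) (hcl : ∀ q ∈ S, ∀ a, A.delta q a ∈ S) : ∀ q, q ∈ S := by
  have key : ∀ (w : List (Fin k)) (q), q ∈ S → deltaStar A.delta q w ∈ S := by
    intro w
    induction w with
    | nil => intro q hq; exact hq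
    | cons a w ih => intro q hq; exact ih _ (hcl q hq a)
  intro q
  obtain ⟨w, hw⟩ := hc q
  exact hw ▸ key w A.q0 h0

lemma scan_length_ge (hk : 0 < k) (A : DFAacc n k) (hc : InitiallyConn A) :
    ∀ t, min n (t / k + 1) ≤ (scan hk A t).length := by
  intro t
  induction t using Nat.strong_induction_on with
  | _ t IH =>
    match t with
    | 0 => simpa [scan_zero] using Nat.min_le_right n 1
    | (t+1) =>
      have hmono : (scan hk A t).length ≤ (scan hk A (t+1)).length :=
        (scan_prefix_succ hk A t).length_le
      have IHt := IH t (Nat.lt_succ_self t)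
      rcases Nat.lt_or_ge ((t+1)/k) (t/k + 1) with hdiv | hdiv
      · calc min n ((t+1)/k + 1) ≤ min n (t/k + 1) := min_le_min le_rfl (by omega)
          _ ≤ _ := IHt.trans hmono
      · have hdle : (t+1)/k ≤ t/k + 1 := by
          calc (t+1)/k ≤ (t+k)/k := Nat.div_le_div_right (by omega)
            _ = t/k + 1 := by rw [Nat.add_div_right _ hk]
        have hdeq : (t+1)/k = t/k + 1 := le_antisymm hdle hdiv
        have hdm := Nat.div_add_mod t k
        have hdm1 := Nat.div_add_mod (t+1) k
        have hmlt : t % k < k := Nat.mod_lt t hk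
        have hm1lt : (t+1) % k < k := Nat.mod_lt _ hk
        set m := t / k with hm
        have hdm1' : k * (m+1) + (t+1) % k = t + 1 := by rw [← hdeq]; exact hdm1
        have hexp : k * (m+1) = k * m + k := by ring
        have hr : t % k = k - 1 := by omega
        set l := (scan hk A t).length with hl
        rw [hdeq]
        rcases Nat.lt_or_ge l n with hln | hln
        · have hml : m + 1 ≤ l := by
            rcases Nat.le_total n (m+1) with h' | h'
            · have : n ≤ l := le_trans (le_min le_rfl (by omega)) IHt
              omega
            · have : min n (m+1) = m + 1 := min_eq_right h'
              omega
          rcases Nat.lt_or_ge (m+1) l with h' | h'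
          · calc min n (m + 1 + 1) ≤ m + 2 := min_le_right _ _
              _ ≤ l := by omega
              _ ≤ _ := hmono
          · have hlm : l = m + 1 := by omega
            by_cases happ :
                A.delta ((scan hk A t).getD (t / k) A.q0) ⟨t % k, Nat.mod_lt t hk⟩
                  ∈ scan hk A t
            · exfalso
              set L := scan hk A t with hL
              have hclosed : ∀ q ∈ L.toFinset, ∀ a : Fin k, A.delta q a ∈ L.toFinset := by
                intro q hq a
                rw [List.mem_toFinset] at hq ⊢
                obtain ⟨i, hi, hqi⟩ := List.mem_iff_getElem.mp hq
                have hik : i ≤ m := by omega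
                set s := k * i + a.val with hsdef
                have hsk : s / k = i := by
                  rw [hsdef, Nat.mul_add_div hk, Nat.div_eq_of_lt a.isLt, Nat.add_zero]
                have hsm : s % k = a.val := by
                  rw [hsdef, Nat.mul_add_mod, Nat.mod_eq_of_lt a.isLt]
                have hst : s ≤ t := by
                  have h1 : k * i ≤ k * m := Nat.mul_le_mul_left k hik
                  have h2 : a.val ≤ k - 1 := by omega
                  omega
                rcases Nat.lt_or_ge s t with hs | hs
                · -- strictly earlier step
                  have hlen_s : i < (scan hk A s).length := by
                    have hIHs := IH s (by omega)
                    rw [hsk] at hIHs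
                    have hin : min n (i+1) = i + 1 := min_eq_right (by omega)
                    omega
                  have hgd : (scan hk A s).getD (s / k) A.q0 = q := by
                    rw [hsk, ← scan_getD_eq hk A (le_of_lt hs) (hsk ▸ hlen_s)]
                    · rw [List.getD_eq_getElem _ _ (by omega), hqi]
                  have ha : (⟨s % k, Nat.mod_lt s hk⟩ : Fin k) = a := Fin.ext hsm
                  have hmem := step_mem hk A s
                  rw [hgd, ha] at hmem
                  exact (scan_prefix hk A (by omega : s + 1 ≤ t)).subset hmem
                · -- s = t : this is the current step
                  have hseq : s = t := le_antisymm hst hs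
                  have hieq : i = m := by rw [← hsk, hseq]
                  have haeq : (⟨t % k, Nat.mod_lt t hk⟩ : Fin k) = a := by
                    apply Fin.ext
                    rw [← hsm, hseq]
                  have hie : t / k = i := by omega
                  have hgd : L.getD (t / k) A.q0 = q := by
                    rw [hie, List.getD_eq_getElem _ _ hi, hqi]
                  rw [hgd, haeq] at happ
                  exact happ
              have h0 : A.q0 ∈ L.toFinset := by
                rw [List.mem_toFinset]
                have hh := scan_head hk A t
                rw [List.getD_eq_getElem _ _ (scan_length_pos hk A t)] at hh
                exact hh ▸ List.getElem_mem _
              have hall := conn_univ hc h0 hclosed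
              have h1 : (Finset.univ : Finset (Fin n)).card ≤ L.toFinset.card :=
                Finset.card_le_card (fun q _ => hall q)
              have h2 : L.toFinset.card = l := List.toFinset_card_of_nodup (scan_nodup hk A t)
              simp at h1
              omega
            · have hstep : (scan hk A (t+1)).length = l + 1 := by
                rw [scan_succ]
                simp only [happ, if_false]
                simp [hl]
              calc min n (m + 1 + 1) ≤ m + 2 := min_le_right _ _
                _ ≤ _ := by omega
        · calc min n (m + 1 + 1) ≤ n := min_le_left _ _
            _ ≤ l := hln
            _ ≤ _ := hmono

end Canon

namespace Canon
variable {n k : ℕ}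

lemma canonList_length (hk : 0 < k) (hn : 0 < n) (A : DFAacc n k) (hc : InitiallyConn A) :
    (scan hk A (k * n)).length = n := by
  have h1 := scan_length_ge hk A hc (k * n)
  have h2 := scan_length_le hk A (k * n)
  rw [Nat.mul_div_cancel_left n hk] at h1
  have : min n (n+1) = n := min_eq_left (by omega)
  omega

variable (hk : 0 < k) (hn : 0 < n) (A : DFAacc n k) (hc : InitiallyConn A)

/-- The canonical renaming equivalence: `i ↦` the `i`-th discovered state. -/
noncomputable def canonEquiv : Fin n ≃ Fin n :=
  Equiv.ofBijective
    (fun i => (scan hk A (k * n)).get (Fin.cast (canonList_length hk hn A hc).symm i))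
    (Finite.injective_iff_bijective.mp (fun i j hij => by
      have := (List.nodup_iff_injective_get.mp (scan_nodup hk A (k * n))) hij
      simpa [Fin.ext_iff] using this))

lemma canonEquiv_apply (i : Fin n) :
    canonEquiv hk hn A hc i
      = (scan hk A (k * n)).get (Fin.cast (canonList_length hk hn A hc).symm i) := rfl

lemma canonEquiv_val (i : Fin n) (h : (i : ℕ) < (scan hk A (k * n)).length) :
    canonEquiv hk hn A hc i = (scan hk A (k * n))[(i : ℕ)] := rfl

/-- The canonical string of an ICDFA. -/
noncomputable def canonString : Fin (k * n) → Fin n := fun t =>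
  (canonEquiv hk hn A hc).symm
    (A.delta ((scan hk A (k * n)).get
        ⟨(t : ℕ) / k, by
          rw [canonList_length hk hn A hc]
          exact Nat.div_lt_of_lt_mul t.isLt⟩)
      ⟨(t : ℕ) % k, Nat.mod_lt _ hk⟩)

/-- The canonical final-state set of an ICDFA. -/
noncomputable def canonFinal : Finset (Fin n) :=
  A.final.image (canonEquiv hk hn A hc).symm

end Canon

namespace Canon
variable {n k : ℕ}

lemma deltaStar_append (d : Fin n → Fin k → Fin n) (q : Fin n) (u v : List (Fin k)) :
    deltaStar d q (u ++ v) = deltaStar d (deltaStar d q u) v := by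
  induction u generalizing q with
  | nil => rfl
  | cons a u ih => simp [deltaStar, ih]

/-- The canonical DFA associated to a string and a set of final states. -/
def canonDFA (hn : 0 < n) (s : Fin (k * n) → Fin n) (F : Finset (Fin n)) : DFAacc n k where
  delta q a := s ⟨k * q.val + a.val, by
    calc k * q.val + a.val < k * q.val + k := by omega
      _ = k * (q.val + 1) := by ring
      _ ≤ k * n := Nat.mul_le_mul_left k q.isLt⟩
  q0 := ⟨0, hn⟩
  final := F

lemma canonDFA_delta (hn : 0 < n) (s : Fin (k * n) → Fin n) (F : Finset (Fin n))
    (q : Fin n) (a : Fin k) (h : k * q.val + a.val < k * n) :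
    (canonDFA hn s F).delta q a = s ⟨k * q.val + a.val, h⟩ := rfl

lemma div_mod_lemma (hk : 0 < k) (q : Fin n) (a : Fin k) :
    (k * q.val + a.val) / k = q.val ∧ (k * q.val + a.val) % k = a.val :=
  ⟨by rw [Nat.mul_add_div hk, Nat.div_eq_of_lt a.isLt, Nat.add_zero],
   by rw [Nat.mul_add_mod, Nat.mod_eq_of_lt a.isLt]⟩

variable (hk : 0 < k) (hn : 0 < n) (A : DFAacc n k) (hc : InitiallyConn A)

lemma canonString_eq (q : Fin n) (a : Fin k) (h : k * q.val + a.val < k * n) :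
    canonString hk hn A hc ⟨k * q.val + a.val, h⟩
      = (canonEquiv hk hn A hc).symm (A.delta (canonEquiv hk hn A hc q) a) := by
  obtain ⟨h1, h2⟩ := div_mod_lemma hk q a
  simp only [canonString, canonEquiv_apply]
  congr 2
  · simp [Fin.ext_iff, h1]
  · simp [Fin.ext_iff, h2]

lemma canonDFA_delta' (hk : 0 < k) (hn : 0 < n) (s : Fin (k * n) → Fin n)
    (F : Finset (Fin n)) (j : Fin (k * n)) (hq : (j : ℕ) / k < n) :
    (canonDFA hn s F).delta ⟨(j : ℕ) / k, hq⟩ ⟨(j : ℕ) % k, Nat.mod_lt _ hk⟩ = s j := by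
  rw [canonDFA_delta hn s F _ _ (by
    show k * ((j : ℕ) / k) + (j : ℕ) % k < k * n
    rw [Nat.div_add_mod]; exact j.isLt)]
  congr 1
  simp [Fin.ext_iff, Nat.div_add_mod]

/-- The canonical DFA of a string satisfying rule (R2) is initially connected. -/
lemma canonDFA_conn (hk : 0 < k) (hn : 0 < n) (s : Fin (k * n) → Fin n) (F : Finset (Fin n))
    (hR2 : RuleR2 n k s) : InitiallyConn (canonDFA hn s F) := by
  set C := canonDFA hn s F with hC
  have H : ∀ m (hm : m < n), ∃ w, deltaStar C.delta C.q0 w = ⟨m, hm⟩ := by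
    intro m
    induction m using Nat.strong_induction_on with
    | _ m IH =>
      intro hm
      rcases Nat.eq_zero_or_pos m with rfl | hm1
      · exact ⟨[], rfl⟩
      · obtain ⟨j, hjlt, hjval⟩ := hR2 m hm1 (by omega)
        have hjm : (j : ℕ) < m * k := Nat.mul_comm k m ▸ hjlt
        have hq' : (j : ℕ) / k < m := (Nat.div_lt_iff_lt_mul hk).mpr hjm
        have hq'n : (j : ℕ) / k < n := lt_trans hq' hm
        obtain ⟨w, hw⟩ := IH _ hq' hq'n
        refine ⟨w ++ [⟨(j : ℕ) % k, Nat.mod_lt _ hk⟩], ?_⟩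
        rw [deltaStar_append, hw]
        show C.delta _ _ = _
        rw [hC, canonDFA_delta' hk hn s F j hq'n]
        exact Fin.ext hjval
  intro q
  obtain ⟨w, hw⟩ := H q.val q.isLt
  exact ⟨w, by simpa using hw⟩

/-- Every ICDFA is isomorphic to the canonical DFA of its canonical string. -/
lemma iso_canon :
    IsIso A (canonDFA hn (canonString hk hn A hc) (canonFinal hk hn A hc)) := by
  set e := canonEquiv hk hn A hc with he
  refine ⟨e.symm, ?_, ?_, ?_⟩
  · rw [Equiv.symm_apply_eq]
    show _ = (scan hk A (k*n)).get _
    have hh := scan_head hk A (k * n)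
    rw [List.getD_eq_getElem _ _ (scan_length_pos hk A (k*n))] at hh
    exact hh.symm
  · intro q a
    have h : k * ((e.symm q) : Fin n).val + a.val < k * n := by
      calc k * (e.symm q).val + a.val < k * (e.symm q).val + k := by omega
        _ = k * ((e.symm q).val + 1) := by ring
        _ ≤ k * n := Nat.mul_le_mul_left k (e.symm q).isLt
    show e.symm (A.delta q a) = canonString hk hn A hc ⟨k * (e.symm q).val + a.val, h⟩
    rw [canonString_eq hk hn A hc (e.symm q) a h, he]
    rw [Equiv.apply_symm_apply]
  · intro q
    show q ∈ A.final ↔ e.symm q ∈ A.final.image e.symm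
    rw [Finset.mem_image]
    constructor
    · exact fun h => ⟨q, h, rfl⟩
    · rintro ⟨q', hq', hq'e⟩
      have : q' = q := e.symm.injective hq'e
      exact this ▸ hq'

end Canon

namespace Canon
variable {n k : ℕ} (hk : 0 < k) (hn : 0 < n) (A : DFAacc n k) (hc : InitiallyConn A)

include hk hn hc

lemma divlt {t : ℕ} (ht : t < k * n) : t / k < n :=
  (Nat.div_lt_iff_lt_mul hk).mpr (Nat.mul_comm k n ▸ ht)

lemma scan_target_eq (t : ℕ) (ht : t < k * n) :
    canonString hk hn A hc ⟨t, ht⟩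
      = (canonEquiv hk hn A hc).symm
          (A.delta ((scan hk A t).getD (t / k) A.q0) ⟨t % k, Nat.mod_lt _ hk⟩) := by
  have hdiv : t / k < n := divlt hk hn A hc ht
  have hlen : t / k < (scan hk A t).length := by
    have := scan_length_ge hk A hc t
    have : min n (t/k + 1) = t/k + 1 := min_eq_right (by omega)
    omega
  show (canonEquiv hk hn A hc).symm (A.delta ((scan hk A (k*n)).get ⟨t / k, _⟩) _) = _
  congr 2
  have h1 : (scan hk A t).getD (t/k) A.q0 = (scan hk A (k*n)).getD (t/k) A.q0 :=
    (scan_getD_eq hk A (le_of_lt ht) hlen).symm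
  rw [h1, List.getD_eq_getElem _ _ (by rw [canonList_length hk hn A hc]; exact hdiv)]
  rfl

lemma new_elem {t : ℕ} {x : Fin n} (hx1 : x ∉ scan hk A t) (hx2 : x ∈ scan hk A (t+1)) :
    A.delta ((scan hk A t).getD (t / k) A.q0) ⟨t % k, Nat.mod_lt _ hk⟩ = x ∧
      scan hk A (t+1) = scan hk A t ++ [x] := by
  by_cases h : A.delta ((scan hk A t).getD (t / k) A.q0) ⟨t % k, Nat.mod_lt t hk⟩
      ∈ scan hk A t
  · rw [scan_succ] at hx2
    dsimp only at hx2
    rw [if_pos h] at hx2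
    exact absurd hx2 hx1
  · have hs : scan hk A (t+1) = scan hk A t ++
        [A.delta ((scan hk A t).getD (t / k) A.q0) ⟨t % k, Nat.mod_lt t hk⟩] := by
      rw [scan_succ]
      dsimp only
      rw [if_neg h]
    rw [hs] at hx2
    simp only [List.mem_append, List.mem_singleton] at hx2
    rcases hx2 with h' | h'
    · exact absurd h' hx1
    · rw [← h'] at hs ⊢
      exact ⟨rfl, hs⟩

lemma first_entry {x : Fin n} {b : ℕ} (hb : x ∈ scan hk A b) (h0 : x ∉ scan hk A 0) :
    ∃ t < b, x ∉ scan hk A t ∧ x ∈ scan hk A (t+1) := by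
  induction b with
  | zero => exact absurd hb h0
  | succ b ih =>
    by_cases hxb : x ∈ scan hk A b
    · obtain ⟨t, ht, h1, h2⟩ := ih hxb
      exact ⟨t, by omega, h1, h2⟩
    · exact ⟨b, Nat.lt_succ_self b, hxb, hb⟩

lemma eSymm_getD (m : ℕ) (hm : m < n) :
    (canonEquiv hk hn A hc).symm ((scan hk A (k*n)).getD m A.q0) = ⟨m, hm⟩ := by
  rw [Equiv.symm_apply_eq, canonEquiv_apply]
  rw [List.getD_eq_getElem _ _ (by rw [canonList_length hk hn A hc]; exact hm)]
  rfl

lemma birth (m : ℕ) (h1 : 1 ≤ m) (h2 : m < n) :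
    ∃ t < k * m, (scan hk A t).length = m ∧
      (scan hk A (k*n)).getD m A.q0 ∉ scan hk A t ∧
      (scan hk A (k*n)).getD m A.q0 ∈ scan hk A (t+1) := by
  set L := scan hk A (k*n) with hLdef
  have hLlen : L.length = n := canonList_length hk hn A hc
  set x := L.getD m A.q0 with hx
  have hmL : m < L.length := by omega
  -- x ∈ scan (k*m)
  have hlenkm : m + 1 ≤ (scan hk A (k*m)).length := by
    have h := scan_length_ge hk A hc (k*m)
    rw [Nat.mul_div_cancel_left m hk] at h
    have : min n (m+1) = m + 1 := min_eq_right (by omega)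
    omega
  have hxkm : x ∈ scan hk A (k*m) := by
    have hgd : (scan hk A (k*m)).getD m A.q0 = x := by
      rw [hx, hLdef, scan_getD_eq hk A (Nat.mul_le_mul_left k (le_of_lt h2)) (by omega)]
    rw [← hgd, List.getD_eq_getElem _ _ (by omega)]
    exact List.getElem_mem _
  -- x ∉ scan 0
  have hx0 : x ∉ scan hk A 0 := by
    rw [scan_zero]
    simp only [List.mem_singleton]
    intro hcon
    have hq0 : L.getD 0 A.q0 = A.q0 := scan_head hk A (k*n)
    rw [List.getD_eq_getElem _ _ (by omega)] at hq0
    rw [hx, List.getD_eq_getElem _ _ hmL, ← hq0] at hcon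
    have := (List.Nodup.getElem_inj_iff (scan_nodup hk A (k*n))).mp hcon
    omega
  obtain ⟨t, ht, hn1, hn2⟩ := first_entry hk hn A hc hxkm hx0
  refine ⟨t, ht, ?_, hn1, hn2⟩
  -- the length of scan t is exactly m
  obtain ⟨htgt, happend⟩ := new_elem hk hn A hc hn1 hn2
  have hpre : scan hk A (t+1) <+: L := scan_prefix hk A (by
    have : k * m ≤ k * n := Nat.mul_le_mul_left k (le_of_lt h2)
    omega)
  have hlt : (scan hk A t).length < (scan hk A (t+1)).length := by
    rw [happend]; simp
  have hgetx : (scan hk A (t+1))[(scan hk A t).length]'hlt = x := by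
    rw [List.getElem_of_eq happend hlt, List.getElem_append_right (le_refl _)]
    simp
  have hlenle := hpre.length_le
  have hLget : L[(scan hk A t).length]'(by omega) = x := by
    obtain ⟨u, hu⟩ := hpre
    rw [List.getElem_of_eq hu.symm (by omega), List.getElem_append_left hlt]
    exact hgetx
  have hxm : L[m]'hmL = x := by rw [hx, List.getD_eq_getElem _ _ hmL]
  have := (List.Nodup.getElem_inj_iff (scan_nodup hk A (k*n))).mp
    (hLget.trans hxm.symm)
  omega

lemma canonString_R2 : RuleR2 n k (canonString hk hn A hc) := by
  intro m h1 h2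
  have hmn : m < n := by omega
  obtain ⟨t, ht, hlen, hn1, hn2⟩ := birth hk hn A hc m h1 hmn
  have htkn : t < k * n := by
    have : k * m ≤ k * n := Nat.mul_le_mul_left k (le_of_lt hmn)
    omega
  refine ⟨⟨t, htkn⟩, ht, ?_⟩
  obtain ⟨htgt, _⟩ := new_elem hk hn A hc hn1 hn2
  rw [scan_target_eq hk hn A hc t htkn, htgt, eSymm_getD hk hn A hc m hmn]

lemma canonString_R1 : RuleR1 n k (canonString hk hn A hc) := by
  intro m hm2 hmn i hi
  have hmn' : m < n := by omega
  have hm1n : m - 1 < n := by omega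
  obtain ⟨tm, htm, hlenm, hn1m, hn2m⟩ := birth hk hn A hc m (by omega) hmn'
  obtain ⟨t', ht', hlen', hn1', hn2'⟩ := birth hk hn A hc (m-1) (by omega) hm1n
  -- t' < tm
  have htt : t' < tm := by
    by_contra hcon
    push_neg at hcon
    have := (scan_prefix hk A hcon).length_le
    omega
  -- tm ≤ i
  have htmi : tm ≤ (i : ℕ) := by
    by_contra hcon
    push_neg at hcon
    -- the target at step i is x_m, which would be in scan tm
    have hie : i = (⟨(i : ℕ), i.isLt⟩ : Fin (k*n)) := by simp
    rw [hie, scan_target_eq hk hn A hc (i : ℕ) i.isLt] at hi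
    have hfin : (canonEquiv hk hn A hc).symm
        (A.delta ((scan hk A (i : ℕ)).getD ((i : ℕ) / k) A.q0)
          ⟨(i : ℕ) % k, Nat.mod_lt _ hk⟩) = ⟨m, hmn'⟩ := Fin.ext hi
    rw [← eSymm_getD hk hn A hc m hmn'] at hfin
    have htgt := (canonEquiv hk hn A hc).symm.injective hfin
    have hmem := step_mem hk A (i : ℕ)
    rw [htgt] at hmem
    exact hn1m ((scan_prefix hk A (by omega : (i : ℕ) + 1 ≤ tm)).subset hmem)
  have ht'kn : t' < k * n := by
    have h1 : k * (m-1) ≤ k * n := Nat.mul_le_mul_left k (by omega)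
    omega
  refine ⟨⟨t', ht'kn⟩, by show t' < (i : ℕ); omega, ?_⟩
  obtain ⟨htgt', _⟩ := new_elem hk hn A hc hn1' hn2'
  rw [scan_target_eq hk hn A hc t' ht'kn, htgt', eSymm_getD hk hn A hc (m-1) hm1n]

end Canon

namespace Canon
variable {n k : ℕ}

lemma getD_map (f : Fin n → Fin n) (l : List (Fin n)) (i : ℕ) (d : Fin n) :
    (l.map f).getD i (f d) = f (l.getD i d) := by
  rcases Nat.lt_or_ge i l.length with h | h
  · rw [List.getD_eq_getElem _ _ (by simpa using h), List.getD_eq_getElem _ _ h,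
      List.getElem_map]
  · rw [List.getD_eq_default _ _ (by simpa using h), List.getD_eq_default _ _ h]

lemma deltaStar_map {A B : DFAacc n k} (f : Fin n ≃ Fin n)
    (hdelta : ∀ q a, f (A.delta q a) = B.delta (f q) a) (w : List (Fin k)) (q : Fin n) :
    deltaStar B.delta (f q) w = f (deltaStar A.delta q w) := by
  induction w generalizing q with
  | nil => rfl
  | cons a w ih =>
    show deltaStar B.delta (B.delta (f q) a) w = _
    rw [← hdelta, ih]
    rfl

lemma iso_conn {A B : DFAacc n k} (f : Fin n ≃ Fin n) (hq0 : f A.q0 = B.q0)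
    (hdelta : ∀ q a, f (A.delta q a) = B.delta (f q) a) (hc : InitiallyConn A) :
    InitiallyConn B := by
  intro q
  obtain ⟨w, hw⟩ := hc (f.symm q)
  refine ⟨w, ?_⟩
  rw [← hq0, deltaStar_map f hdelta, hw, Equiv.apply_symm_apply]

lemma scan_map (hk : 0 < k) {A B : DFAacc n k} (f : Fin n ≃ Fin n)
    (hq0 : f A.q0 = B.q0) (hdelta : ∀ q a, f (A.delta q a) = B.delta (f q) a)
    (t : ℕ) : scan hk B t = (scan hk A t).map f := by
  induction t with
  | zero => rw [scan_zero, scan_zero, List.map_singleton, hq0]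
  | succ t ih =>
    have hgd : (scan hk B t).getD (t / k) B.q0
        = f ((scan hk A t).getD (t / k) A.q0) := by
      rw [ih, ← hq0, getD_map]
    have htgt : B.delta ((scan hk B t).getD (t / k) B.q0) ⟨t % k, Nat.mod_lt t hk⟩
        = f (A.delta ((scan hk A t).getD (t / k) A.q0) ⟨t % k, Nat.mod_lt t hk⟩) := by
      rw [hgd, ← hdelta]
    by_cases h : A.delta ((scan hk A t).getD (t / k) A.q0) ⟨t % k, Nat.mod_lt t hk⟩
        ∈ scan hk A t
    · have hB : B.delta ((scan hk B t).getD (t / k) B.q0) ⟨t % k, Nat.mod_lt t hk⟩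
          ∈ scan hk B t := by
        rw [htgt, ih]
        exact List.mem_map_of_mem h
      rw [scan_succ, scan_succ]
      dsimp only
      rw [if_pos h, if_pos hB, ih]
    · have hB : B.delta ((scan hk B t).getD (t / k) B.q0) ⟨t % k, Nat.mod_lt t hk⟩
          ∉ scan hk B t := by
        rw [htgt, ih]
        intro hcon
        exact h (by simpa using (List.mem_map_of_injective f.injective).mp hcon)
      rw [scan_succ, scan_succ]
      dsimp only
      rw [if_neg h, if_neg hB, htgt, ih]
      simp

lemma canonEquiv_iso (hk : 0 < k) (hn : 0 < n) {A B : DFAacc n k}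
    (hcA : InitiallyConn A) (hcB : InitiallyConn B) (f : Fin n ≃ Fin n)
    (hq0 : f A.q0 = B.q0) (hdelta : ∀ q a, f (A.delta q a) = B.delta (f q) a) :
    canonEquiv hk hn B hcB = (canonEquiv hk hn A hcA).trans f := by
  apply Equiv.ext
  intro i
  rw [Equiv.trans_apply, canonEquiv_apply, canonEquiv_apply]
  simp only [List.get_eq_getElem]
  rw [List.getElem_of_eq (scan_map hk f hq0 hdelta (k*n))
    (by simp only [Fin.coe_cast]
        have h1 := i.isLt
        have h2 := canonList_length hk hn B hcB
        omega),
    List.getElem_map]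
  rfl

lemma canonString_iso (hk : 0 < k) (hn : 0 < n) {A B : DFAacc n k}
    (hcA : InitiallyConn A) (hcB : InitiallyConn B) (f : Fin n ≃ Fin n)
    (hq0 : f A.q0 = B.q0) (hdelta : ∀ q a, f (A.delta q a) = B.delta (f q) a) :
    canonString hk hn B hcB = canonString hk hn A hcA := by
  funext t
  have hdiv : (t : ℕ) / k < n := divlt hk hn A hcA t.isLt
  have h1 : canonString hk hn B hcB t
      = (canonEquiv hk hn B hcB).symm
        (B.delta (canonEquiv hk hn B hcB ⟨(t : ℕ)/k, hdiv⟩) ⟨(t:ℕ) % k, Nat.mod_lt _ hk⟩) := rfl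
  have h2 : canonString hk hn A hcA t
      = (canonEquiv hk hn A hcA).symm
        (A.delta (canonEquiv hk hn A hcA ⟨(t : ℕ)/k, hdiv⟩) ⟨(t:ℕ) % k, Nat.mod_lt _ hk⟩) := rfl
  rw [h1, h2, canonEquiv_iso hk hn hcA hcB f hq0 hdelta]
  simp only [Equiv.trans_apply, Equiv.symm_trans_apply]
  rw [← hdelta, Equiv.symm_apply_apply]

lemma canonFinal_iso (hk : 0 < k) (hn : 0 < n) {A B : DFAacc n k}
    (hcA : InitiallyConn A) (hcB : InitiallyConn B) (f : Fin n ≃ Fin n)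
    (hq0 : f A.q0 = B.q0) (hdelta : ∀ q a, f (A.delta q a) = B.delta (f q) a)
    (hfin : ∀ q, q ∈ A.final ↔ f q ∈ B.final) :
    canonFinal hk hn B hcB = canonFinal hk hn A hcA := by
  have hBfin : B.final = A.final.image f := by
    ext x
    rw [Finset.mem_image]
    constructor
    · intro hx
      exact ⟨f.symm x, (hfin (f.symm x)).mpr (by rwa [Equiv.apply_symm_apply]), by simp⟩
    · rintro ⟨q, hq, rfl⟩
      exact (hfin q).mp hq
  show B.final.image _ = A.final.image _
  rw [hBfin, Finset.image_image, canonEquiv_iso hk hn hcA hcB f hq0 hdelta]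
  apply Finset.image_congr
  intro q _
  simp

end Canon

namespace Canon
variable {n k : ℕ}

lemma scan_canonDFA (hk : 0 < k) (hn : 0 < n) (s : Fin (k * n) → Fin n)
    (F : Finset (Fin n)) (hR1 : RuleR1 n k s) (hR2 : RuleR2 n k s) :
    ∀ t, t ≤ k * n →
      (∀ i (h : i < (scan hk (canonDFA hn s F) t).length),
        (((scan hk (canonDFA hn s F) t)[i] : Fin n) : ℕ) = i) ∧
      (∀ j (hj : j < t) (hjkn : j < k * n),
        ((s ⟨j, hjkn⟩ : Fin n) : ℕ) < (scan hk (canonDFA hn s F) t).length) := by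
  set C := canonDFA hn s F with hC
  have hcC : InitiallyConn C := canonDFA_conn hk hn s F hR2
  intro t
  induction t with
  | zero =>
    intro _
    constructor
    · intro i h
      have hlen : (scan hk C 0).length = 1 := by rw [scan_zero]; rfl
      have hi0 : i = 0 := by omega
      subst hi0
      rw [List.getElem_of_eq (scan_zero hk C)]
      rfl
    · intro j hj; omega
  | succ t ih =>
    intro ht1
    obtain ⟨part1, part2⟩ := ih (by omega)
    have htkn : t < k * n := by omega
    set l := (scan hk C t).length with hl
    have hlpos : 0 < l := scan_length_pos hk C t
    have htk : t / k < l := by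
      have h1 := scan_length_ge hk C hcC t
      have h2 : t / k < n := divlt hk hn C hcC htkn
      have : min n (t/k + 1) = t/k + 1 := min_eq_right (by omega)
      omega
    have hq : (scan hk C t).getD (t / k) C.q0 = ⟨t / k, divlt hk hn C hcC htkn⟩ := by
      rw [List.getD_eq_getElem _ _ htk]
      exact Fin.ext (part1 _ htk)
    have htgt : C.delta ((scan hk C t).getD (t / k) C.q0) ⟨t % k, Nat.mod_lt t hk⟩
        = s ⟨t, htkn⟩ := by
      rw [hq]
      exact canonDFA_delta' hk hn s F ⟨t, htkn⟩ (divlt hk hn C hcC htkn)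
    by_cases hval : ((s ⟨t, htkn⟩ : Fin n) : ℕ) < l
    · -- target already present, no append
      have hmem : C.delta ((scan hk C t).getD (t / k) C.q0) ⟨t % k, Nat.mod_lt t hk⟩
          ∈ scan hk C t := by
        rw [htgt]
        have : (scan hk C t)[((s ⟨t, htkn⟩ : Fin n) : ℕ)]'hval = s ⟨t, htkn⟩ :=
          Fin.ext (part1 _ hval)
        rw [← this]
        exact List.getElem_mem _
      have hs : scan hk C (t+1) = scan hk C t := by
        rw [scan_succ]
        dsimp only
        rw [if_pos hmem]
      rw [hs]
      refine ⟨part1, ?_⟩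
      intro j hj hjkn
      rcases Nat.lt_or_ge j t with h' | h'
      · exact part2 j h' hjkn
      · have : j = t := by omega
        subst this
        have : (⟨j, hjkn⟩ : Fin (k*n)) = ⟨j, htkn⟩ := rfl
        rw [this]
        exact hval
    · -- new state: its value must be exactly l
      have heq : ((s ⟨t, htkn⟩ : Fin n) : ℕ) = l := by
        by_contra hne
        have hgt : l < ((s ⟨t, htkn⟩ : Fin n) : ℕ) := by omega
        have hm2 : 2 ≤ ((s ⟨t, htkn⟩ : Fin n) : ℕ) := by omega
        have hmn : ((s ⟨t, htkn⟩ : Fin n) : ℕ) ≤ n - 1 := by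
          have := (s ⟨t, htkn⟩).isLt; omega
        obtain ⟨j, hjlt, hjval⟩ := hR1 _ hm2 hmn ⟨t, htkn⟩ rfl
        have hjt : (j : ℕ) < t := hjlt
        have := part2 (j : ℕ) hjt j.isLt
        have hje : (⟨(j : ℕ), j.isLt⟩ : Fin (k*n)) = j := rfl
        rw [hje, hjval] at this
        omega
      have hnmem : C.delta ((scan hk C t).getD (t / k) C.q0) ⟨t % k, Nat.mod_lt t hk⟩
          ∉ scan hk C t := by
        rw [htgt]
        intro hcon
        obtain ⟨i, hi, hie⟩ := List.mem_iff_getElem.mp hcon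
        have := part1 i hi
        rw [hie] at this
        omega
      have hs : scan hk C (t+1) = scan hk C t ++ [s ⟨t, htkn⟩] := by
        rw [scan_succ]
        dsimp only
        rw [if_neg hnmem, htgt]
      rw [hs]
      have hlen1 : (scan hk C t ++ [s ⟨t, htkn⟩]).length = l + 1 := by simp [hl]
      constructor
      · intro i h
        rcases Nat.lt_or_ge i l with h' | h'
        · rw [List.getElem_append_left h']
          exact part1 i h'
        · have : i = l := by rw [hlen1] at h; omega
          subst this
          rw [List.getElem_append_right h']
          simpa using heq
      · intro j hj hjkn
        rcases Nat.lt_or_ge j t with h' | h'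
        · have := part2 j h' hjkn
          omega
        · have : j = t := by omega
          subst this
          have hje : (⟨j, hjkn⟩ : Fin (k*n)) = ⟨j, htkn⟩ := rfl
          rw [hje, hlen1, heq]
          omega

lemma canonEquiv_canonDFA (hk : 0 < k) (hn : 0 < n) (s : Fin (k * n) → Fin n)
    (F : Finset (Fin n)) (hR1 : RuleR1 n k s) (hR2 : RuleR2 n k s)
    (hcC : InitiallyConn (canonDFA hn s F)) :
    canonEquiv hk hn (canonDFA hn s F) hcC = Equiv.refl (Fin n) := by
  apply Equiv.ext
  intro i
  rw [canonEquiv_apply]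
  apply Fin.ext
  simp only [List.get_eq_getElem, Equiv.refl_apply]
  exact ((scan_canonDFA hk hn s F hR1 hR2 (k*n) le_rfl).1 _ _)

lemma canonString_canonDFA (hk : 0 < k) (hn : 0 < n) (s : Fin (k * n) → Fin n)
    (F : Finset (Fin n)) (hR1 : RuleR1 n k s) (hR2 : RuleR2 n k s)
    (hcC : InitiallyConn (canonDFA hn s F)) :
    canonString hk hn (canonDFA hn s F) hcC = s := by
  funext t
  have hdiv : (t : ℕ) / k < n := divlt hk hn (canonDFA hn s F) hcC t.isLt
  have h1 : canonString hk hn (canonDFA hn s F) hcC t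
      = (canonEquiv hk hn (canonDFA hn s F) hcC).symm
        ((canonDFA hn s F).delta (canonEquiv hk hn (canonDFA hn s F) hcC ⟨(t : ℕ)/k, hdiv⟩)
          ⟨(t:ℕ) % k, Nat.mod_lt _ hk⟩) := rfl
  rw [h1, canonEquiv_canonDFA hk hn s F hR1 hR2 hcC]
  simp only [Equiv.refl_apply, Equiv.refl_symm, Equiv.refl_apply]
  rw [canonDFA_delta' hk hn s F t hdiv]

lemma canonFinal_canonDFA (hk : 0 < k) (hn : 0 < n) (s : Fin (k * n) → Fin n)
    (F : Finset (Fin n)) (hR1 : RuleR1 n k s) (hR2 : RuleR2 n k s)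
    (hcC : InitiallyConn (canonDFA hn s F)) :
    canonFinal hk hn (canonDFA hn s F) hcC = F := by
  show F.image _ = F
  rw [canonEquiv_canonDFA hk hn s F hR1 hR2 hcC]
  simp

end Canon

namespace Canon
variable {n k : ℕ}

lemma isIso_refl (A : DFAacc n k) : IsIso A A :=
  ⟨Equiv.refl _, rfl, fun _ _ => rfl, fun _ => Iff.rfl⟩

lemma isIso_symm {A B : DFAacc n k} (h : IsIso A B) : IsIso B A := by
  obtain ⟨f, hq0, hdelta, hfin⟩ := h
  refine ⟨f.symm, by rw [← hq0, Equiv.symm_apply_apply], ?_, ?_⟩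
  · intro q a
    apply f.injective
    rw [Equiv.apply_symm_apply, hdelta, Equiv.apply_symm_apply]
  · intro q
    rw [hfin (f.symm q), Equiv.apply_symm_apply]

lemma isIso_trans {A B C : DFAacc n k} (h1 : IsIso A B) (h2 : IsIso B C) : IsIso A C := by
  obtain ⟨f, hq0, hdelta, hfin⟩ := h1
  obtain ⟨g, hq0', hdelta', hfin'⟩ := h2
  refine ⟨f.trans g, ?_, ?_, ?_⟩
  · simp [Equiv.trans_apply, hq0, hq0']
  · intro q a
    simp [Equiv.trans_apply, hdelta, hdelta']
  · intro q
    rw [hfin q, hfin' (f q)]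
    rfl

lemma eqvGen_isIso {x y : {A : DFAacc n k // InitiallyConn A}}
    (h : Relation.EqvGen (fun A B : {A : DFAacc n k // InitiallyConn A} => IsIso A.1 B.1) x y) :
    IsIso x.1 y.1 := by
  induction h with
  | rel _ _ h => exact h
  | refl _ => exact isIso_refl _
  | symm _ _ _ ih => exact isIso_symm ih
  | trans _ _ _ _ _ ih1 ih2 => exact isIso_trans ih1 ih2

end Canon


open Canon in
/-- The number of isomorphism classes of initially-connected complete DFAs
(with final states) with `n` states over a `k`-letter alphabet equals
`2^n · B_{k,n}`, where `B_{k,n}` is the number of strings satisfying rules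
(R1) and (R2). -/
theorem stmt13 (n k : ℕ) (hn : 2 ≤ n) (hk : 1 ≤ k) :
    Nat.card
      (Quot (fun A B : {A : DFAacc n k // InitiallyConn A} => IsIso A.1 B.1)) =
      2 ^ n * Nat.card {s : Fin (k * n) → Fin n // RuleR1 n k s ∧ RuleR2 n k s} := by
  have hk' : 0 < k := hk
  have hn' : 0 < n := by omega
  set r := fun A B : {A : DFAacc n k // InitiallyConn A} => IsIso A.1 B.1 with hr
  set Φ : ({s : Fin (k * n) → Fin n // RuleR1 n k s ∧ RuleR2 n k s} × Finset (Fin n))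
      → Quot r := fun p =>
    Quot.mk r ⟨canonDFA hn' p.1.1 p.2, canonDFA_conn hk' hn' p.1.1 p.2 p.1.2.2⟩ with hΦ
  have hbij : Function.Bijective Φ := by
    constructor
    · rintro ⟨⟨s, hs1, hs2⟩, F⟩ ⟨⟨s', hs1', hs2'⟩, F'⟩ heq
      have hiso : IsIso (canonDFA hn' s F) (canonDFA hn' s' F') :=
        eqvGen_isIso (Quot.eq.mp heq)
      obtain ⟨f, hq0, hdelta, hfin⟩ := hiso
      have hcA : InitiallyConn (canonDFA hn' s F) := canonDFA_conn hk' hn' s F hs2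
      have hcB : InitiallyConn (canonDFA hn' s' F') := canonDFA_conn hk' hn' s' F' hs2'
      have h1 : canonString hk' hn' (canonDFA hn' s' F') hcB
          = canonString hk' hn' (canonDFA hn' s F) hcA :=
        canonString_iso hk' hn' hcA hcB f hq0 hdelta
      have h2 : canonFinal hk' hn' (canonDFA hn' s' F') hcB
          = canonFinal hk' hn' (canonDFA hn' s F) hcA :=
        canonFinal_iso hk' hn' hcA hcB f hq0 hdelta hfin
      rw [canonString_canonDFA hk' hn' s' F' hs1' hs2' hcB,
        canonString_canonDFA hk' hn' s F hs1 hs2 hcA] at h1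
      rw [canonFinal_canonDFA hk' hn' s' F' hs1' hs2' hcB,
        canonFinal_canonDFA hk' hn' s F hs1 hs2 hcA] at h2
      subst h1
      subst h2
      rfl
    · intro q
      induction q using Quot.ind with
      | _ a =>
        obtain ⟨A, hcA⟩ := a
        refine ⟨(⟨canonString hk' hn' A hcA,
          canonString_R1 hk' hn' A hcA, canonString_R2 hk' hn' A hcA⟩,
          canonFinal hk' hn' A hcA), ?_⟩
        apply Quot.sound
        show IsIso _ A
        exact isIso_symm (iso_canon hk' hn' A hcA)
  have hcard := Nat.card_eq_of_bijective Φ hbij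
  rw [← hcard, Nat.card_prod]
  have : Nat.card (Finset (Fin n)) = 2 ^ n := by
    rw [Nat.card_eq_fintype_card, Fintype.card_finset, Fintype.card_fin]
  rw [this, Nat.mul_comm]
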